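/- Let f, g : ℝ → ℝ be real-analytic functions. Assume that f(0) = 0, that g(t) ≤ g(0) for all t ∈ ℝ, and that (f'(t))² ≤ (f(t))² + g''(t) for all t ∈ ℝ. Then f and g are both constant functions. -/

import Mathlib

/-- Real-analytic case of Lemma 3.1: if `f`, `g` are real-analytic on `ℝ`,
`f 0 = 0`, `g` has a global maximum at `0`, and `(f')² ≤ f² + g''` everywhere,
then `f` and `g` are constant. -/
theorem stmt_6 (f g : ℝ → ℝ)
    (hf : ∀ t : ℝ, AnalyticAt ℝ f t) (hg : ∀ t : ℝ, AnalyticAt ℝ g t)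
    (hf0 : f 0 = 0)
    (hmax : ∀ t : ℝ, g t ≤ g 0)
    (hineq : ∀ t : ℝ, (deriv f t) ^ 2 ≤ (f t) ^ 2 + deriv (deriv g) t) :
    (∃ c : ℝ, ∀ t : ℝ, f t = c) ∧ (∃ c : ℝ, ∀ t : ℝ, g t = c) := by
  have hfO : AnalyticOnNhd ℝ f Set.univ := fun x _ => hf x
  have hgO : AnalyticOnNhd ℝ g Set.univ := fun x _ => hg x
  have hg' : AnalyticOnNhd ℝ (deriv g) Set.univ := hgO.deriv
  have hg'' : AnalyticOnNhd ℝ (deriv (deriv g)) Set.univ := hg'.deriv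
  have hgmax : IsLocalMax g 0 := Filter.Eventually.of_forall hmax
  have hgd0 : deriv g 0 = 0 := hgmax.deriv_eq_zero
  -- Step 1: f vanishes in a neighborhood of 0.
  have hkey : ∀ᶠ t in nhds (0 : ℝ), f t = 0 := by
    by_contra hne
    have hord : analyticOrderAt f 0 ≠ ⊤ := fun h => hne (analyticOrderAt_eq_top.mp h)
    lift analyticOrderAt f 0 to ℕ using hord with n hn
    obtain ⟨h, hh, hh0, heq⟩ := ((hf 0).analyticOrderAt_eq_natCast (n := n)).mp hn.symm
    have heq' : ∀ᶠ t in nhds (0 : ℝ), f t = t ^ n * h t := by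
      filter_upwards [heq] with t ht
      simpa [smul_eq_mul] using ht
    -- n ≥ 1
    obtain ⟨m, rfl⟩ : ∃ m, n = m + 1 := by
      have hn0 : n ≠ 0 := by
        rintro rfl
        apply hh0
        have := heq'.self_of_nhds
        simpa [hf0] using this.symm
      exact ⟨n - 1, (Nat.succ_pred_eq_of_ne_zero hn0).symm⟩
    -- h is analytic near 0, so deriv h is continuous at 0
    obtain ⟨s, hs_mem, hs⟩ : ∃ s ∈ nhds (0 : ℝ), ∀ x ∈ s, AnalyticAt ℝ h x := by
      simpa [Filter.eventually_iff_exists_mem] using hh.eventually_analyticAt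
    obtain ⟨u, hus, hu_open, hu0⟩ := mem_nhds_iff.mp hs_mem
    have hsu : AnalyticOnNhd ℝ h u := fun x hx => hs x (hus hx)
    have hdh : AnalyticOnNhd ℝ (deriv h) u := hsu.deriv
    have hu_nhds : u ∈ nhds (0 : ℝ) := hu_open.mem_nhds hu0
    -- ψ t := ((m+1) h t + t * h' t)^2 - t^2 * (h t)^2 is continuous at 0 and ψ 0 > 0
    set ψ : ℝ → ℝ := fun t => (((m : ℝ) + 1) * h t + t * deriv h t) ^ 2 - t ^ 2 * (h t) ^ 2
      with hψ
    have hψcont : ContinuousAt ψ 0 := by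
      have hch : ContinuousAt h 0 := hh.continuousAt
      have hcdh : ContinuousAt (deriv h) 0 := (hdh 0 hu0).continuousAt
      fun_prop
    have hψ0 : 0 < ψ 0 := by
      have : ψ 0 = (((m : ℝ) + 1) * h 0) ^ 2 := by simp [hψ]
      rw [this]
      positivity
    have hψpos : ∀ᶠ t in nhds (0 : ℝ), 0 < ψ t :=
      continuousAt_const.eventually_lt hψcont hψ0
    -- near 0, deriv f t ^ 2 - f t ^ 2 = t ^ (2m) * ψ t
    have hderiv : ∀ᶠ t in nhds (0 : ℝ),
        deriv f t = ((m : ℝ) + 1) * t ^ m * h t + t ^ (m + 1) * deriv h t := by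
      have hfe : f =ᶠ[nhds (0 : ℝ)] fun t => t ^ (m + 1) * h t := heq'
      have hde : deriv f =ᶠ[nhds (0 : ℝ)] deriv (fun t => t ^ (m + 1) * h t) := hfe.deriv
      filter_upwards [hde, hu_nhds] with t ht htu
      rw [ht, ((hasDerivAt_pow (m + 1) t).fun_mul
        ((hsu t htu).differentiableAt.hasDerivAt)).deriv]
      push_cast [Nat.add_sub_cancel]
      ring
    have hfactor : ∀ᶠ t in nhds (0 : ℝ),
        deriv f t ^ 2 - f t ^ 2 = t ^ (2 * m) * ψ t := by
      filter_upwards [hderiv, heq'] with t h1 h2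
      rw [h1, h2, hψ]
      have e1 : t ^ (m + 1) = t ^ m * t := pow_succ t m
      have e2 : t ^ (2 * m) = (t ^ m) ^ 2 := by rw [Nat.mul_comm, pow_mul]
      rw [e1, e2]
      generalize t ^ m = u
      ring
    -- extract ε
    obtain ⟨ε, hε, hball⟩ := Metric.eventually_nhds_iff.mp (hψpos.and hfactor)
    have hgpos : ∀ t : ℝ, 0 < t → t < ε → 0 < deriv (deriv g) t := by
      intro t ht0 htε
      have hd : dist t 0 < ε := by
        rw [Real.dist_eq, sub_zero, abs_of_pos ht0]; exact htε
      obtain ⟨hψt, hft⟩ := hball hd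
      have h1 : t ^ (2 * m) * ψ t ≤ deriv (deriv g) t := by
        have := hineq t
        linarith [hft]
      have : 0 < t ^ (2 * m) * ψ t := mul_pos (pow_pos ht0 _) hψt
      linarith
    -- deriv g is strictly monotone on [0, ε/2]
    set b := ε / 2 with hb
    have hb0 : 0 < b := by positivity
    have hbe : b < ε := by simp [hb]; linarith
    have hmono1 : StrictMonoOn (deriv g) (Set.Icc 0 b) := by
      apply strictMonoOn_of_deriv_pos (convex_Icc 0 b)
      · exact (hg'.continuousOn).mono (Set.subset_univ _)
      · intro x hx
        rw [interior_Icc] at hx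
        exact hgpos x hx.1 (lt_trans hx.2 hbe)
    have hg'pos : ∀ x ∈ Set.Ioo 0 b, 0 < deriv g x := by
      intro x hx
      have := hmono1 (Set.left_mem_Icc.mpr hb0.le) ⟨hx.1.le, hx.2.le⟩ hx.1
      rwa [hgd0] at this
    have hmono2 : StrictMonoOn g (Set.Icc 0 b) := by
      apply strictMonoOn_of_deriv_pos (convex_Icc 0 b)
      · exact (hgO.continuousOn).mono (Set.subset_univ _)
      · intro x hx
        rw [interior_Icc] at hx
        exact hg'pos x hx
    have : g 0 < g b :=
      hmono2 (Set.left_mem_Icc.mpr hb0.le) (Set.right_mem_Icc.mpr hb0.le) hb0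
    exact absurd (hmax b) (not_le.mpr this)
  -- Step 2: f ≡ 0 everywhere by the identity principle.
  have hfzero : ∀ t : ℝ, f t = 0 := by
    intro t
    have := hfO.eqOn_zero_of_preconnected_of_eventuallyEq_zero isPreconnected_univ
      (Set.mem_univ 0) (hkey.mono fun x hx => by simpa using hx)
    simpa using this (Set.mem_univ t)
  have hfeq : f = fun _ => (0 : ℝ) := funext hfzero
  -- hence g'' ≥ 0 everywhere
  have hg''nonneg : ∀ t : ℝ, 0 ≤ deriv (deriv g) t := by
    intro t
    have := hineq t
    rw [hfeq] at this
    simpa using this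
  -- deriv g is monotone
  have hgdiff : Differentiable ℝ (deriv g) := fun x => (hg' x (Set.mem_univ x)).differentiableAt
  have hg'mono : Monotone (deriv g) := monotone_of_deriv_nonneg hgdiff hg''nonneg
  -- g is constant
  refine ⟨⟨0, hfzero⟩, ⟨g 0, fun t => ?_⟩⟩
  rcases le_or_gt 0 t with ht | ht
  · -- g monotone on [0, t]
    have hmono : MonotoneOn g (Set.Icc 0 t) := by
      apply monotoneOn_of_deriv_nonneg (convex_Icc 0 t)
      · exact (hgO.continuousOn).mono (Set.subset_univ _)
      · exact (hgO.differentiableOn).mono (Set.subset_univ _)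
      · intro x hx
        rw [interior_Icc] at hx
        have := hg'mono hx.1.le
        rwa [hgd0] at this
    have := hmono (Set.left_mem_Icc.mpr ht) (Set.right_mem_Icc.mpr ht) ht
    exact le_antisymm (hmax t) this
  · -- g antitone on [t, 0]
    have hmono : AntitoneOn g (Set.Icc t 0) := by
      apply antitoneOn_of_deriv_nonpos (convex_Icc t 0)
      · exact (hgO.continuousOn).mono (Set.subset_univ _)
      · exact (hgO.differentiableOn).mono (Set.subset_univ _)
      · intro x hx
        rw [interior_Icc] at hx
        have := hg'mono hx.2.le
        rwa [hgd0] at this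
    have := hmono (Set.left_mem_Icc.mpr ht.le) (Set.right_mem_Icc.mpr ht.le) ht.le
    exact le_antisymm (hmax t) this
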